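/- For m, n ≥ 2 and any σ > 0, the convex 1-smooth function f(X) := (1/2)‖X − A‖_F² on ℝ^{m×n}, where A = diag(1 + σ, σ, …, σ), has a unique minimizer X* over the unit trace-norm ball, namely X* = E_{1,1} (the matrix with 1 in entry (1,1) and zeros elsewhere), which has rank one, while ∇f(X*) = diag(−σ, …, −σ), so that #σ_1(∇f(X*)) = min{m,n}. In particular, the inequality max{rank(X) : X ∈ 𝒳*} ≤ min{#σ_1(∇f(Y)) : Y ∈ 𝒳*} can be strict. -/

import Mathlib

/- Common definitions: Frobenius norm and inner product, singular values in
non-increasing order, trace (nuclear) norm, multiplicity of the top singular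
value, Euclidean projection onto the trace-norm ball, the spectrahedron and its
projection, sorted eigenvalues of symmetric matrices, best rank-`r`
approximations, and the singular-value soft-thresholding (prox) operator. -/

open scoped BigOperators
open Matrix MeasureTheory ProbabilityTheory

attribute [local instance] Matrix.normedAddCommGroup Matrix.normedSpace

noncomputable section

/-- Frobenius norm of a real matrix. -/
def frobNorm {m n : ℕ} (X : Matrix (Fin m) (Fin n) ℝ) : ℝ :=
  Real.sqrt (∑ i, ∑ j, (X i j) ^ 2)

/-- Frobenius inner product of two real matrices. -/
def frobInner {m n : ℕ} (A B : Matrix (Fin m) (Fin n) ℝ) : ℝ :=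
  ∑ i, ∑ j, A i j * B i j

/-- The continuous linear functional `H ↦ ⟨G, H⟩` (Frobenius inner product);
`HasFDerivAt f (frobCLM G) X` says that `G` is the gradient of `f` at `X`. -/
def frobCLM {m n : ℕ} (G : Matrix (Fin m) (Fin n) ℝ) :
    Matrix (Fin m) (Fin n) ℝ →L[ℝ] ℝ :=
  LinearMap.toContinuousLinearMap
    { toFun := fun H => frobInner G H
      map_add' := fun x y => by
        simp [frobInner, Matrix.add_apply, mul_add, Finset.sum_add_distrib]
      map_smul' := fun c x => by
        simp [frobInner, Matrix.smul_apply, smul_eq_mul, Finset.mul_sum, mul_left_comm] }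

/-- The non-increasing (descending) rearrangement of a finite tuple of reals. -/
def sortedDesc {N : ℕ} (f : Fin N → ℝ) : Fin N → ℝ :=
  fun i => f (Tuple.sort f i.rev)

/-- The singular values of a real `m × n` matrix in non-increasing order
(the square roots of the eigenvalues of `Xᵀ * X`), padded with zeros so that
there are `n` of them. -/
def svalsFin {m n : ℕ} (X : Matrix (Fin m) (Fin n) ℝ) : Fin n → ℝ :=
  sortedDesc (fun i => Real.sqrt (((by simpa [Matrix.conjTranspose_eq_transpose_of_trivial] using
    Matrix.isHermitian_conjTranspose_mul_self X : (Xᵀ * X).IsHermitian)).eigenvalues i))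

/-- `svalI X i` is the `(i+1)`-th largest singular value of `X` (i.e. `0`-indexed:
`svalI X 0 = σ₁(X)`), interpreted as `0` when the index is out of range. -/
def svalI {m n : ℕ} (X : Matrix (Fin m) (Fin n) ℝ) (i : ℕ) : ℝ :=
  if h : i < n then svalsFin X ⟨i, h⟩ else 0

/-- The trace norm (nuclear norm): the sum of the singular values. -/
def traceNorm {m n : ℕ} (X : Matrix (Fin m) (Fin n) ℝ) : ℝ :=
  ∑ i, svalsFin X i

/-- `#σ₁(X)`: the multiplicity of the largest singular value of `X`. -/
def multTop {m n : ℕ} (X : Matrix (Fin m) (Fin n) ℝ) : ℕ :=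
  Nat.card {i : Fin n // svalsFin X i = svalI X 0}

/-- `P` is the Euclidean (Frobenius) projection of `X` onto the trace-norm ball
of radius `τ`. -/
def IsTraceBallProj {m n : ℕ} (τ : ℝ) (X P : Matrix (Fin m) (Fin n) ℝ) : Prop :=
  traceNorm P ≤ τ ∧ ∀ Z, traceNorm Z ≤ τ → frobNorm (X - P) ≤ frobNorm (X - Z)

/-- The Euclidean projection onto the trace-norm ball of radius `τ`. -/
def projTraceBall {m n : ℕ} (τ : ℝ) (X : Matrix (Fin m) (Fin n) ℝ) :
    Matrix (Fin m) (Fin n) ℝ :=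
  open scoped Classical in
  if h : ∃ P, IsTraceBallProj τ X P then h.choose else 0

/-- `Y` is a best rank-`r` approximation of `X` in Frobenius norm. -/
def IsBestRankApprox {m n : ℕ} (r : ℕ) (X Y : Matrix (Fin m) (Fin n) ℝ) : Prop :=
  Y.rank ≤ r ∧ ∀ Z : Matrix (Fin m) (Fin n) ℝ, Z.rank ≤ r → frobNorm (X - Y) ≤ frobNorm (X - Z)

/-- The spectrahedron: positive semidefinite matrices of unit trace. -/
def SpectraSet (n : ℕ) : Set (Matrix (Fin n) (Fin n) ℝ) :=
  {X | X.PosSemidef ∧ X.trace = 1}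

/-- `P` is the Euclidean (Frobenius) projection of `X` onto the spectrahedron. -/
def IsSpectraProj {n : ℕ} (X P : Matrix (Fin n) (Fin n) ℝ) : Prop :=
  P ∈ SpectraSet n ∧ ∀ Z ∈ SpectraSet n, frobNorm (X - P) ≤ frobNorm (X - Z)

/-- The Euclidean projection onto the spectrahedron. -/
def projSpectra {n : ℕ} (X : Matrix (Fin n) (Fin n) ℝ) : Matrix (Fin n) (Fin n) ℝ :=
  open scoped Classical in
  if h : ∃ P, IsSpectraProj X P then h.choose else 0

/-- `evalI X i` is the `(i+1)`-th largest eigenvalue of the symmetric matrix `X`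
(`0`-indexed: `evalI X 0 = λ₁(X)`, `evalI X (n-1) = λ_n(X)`); junk value `0` if
`X` is not symmetric or the index is out of range. -/
def evalI {n : ℕ} (X : Matrix (Fin n) (Fin n) ℝ) (i : ℕ) : ℝ :=
  open scoped Classical in
  if h : i < n then
    (if hX : X.IsHermitian then sortedDesc hX.eigenvalues ⟨i, h⟩ else 0)
  else 0

/-- The multiplicity of the smallest eigenvalue of a symmetric matrix. -/
def multMinEig {n : ℕ} (X : Matrix (Fin n) (Fin n) ℝ) : ℕ :=
  Nat.card {i : Fin n // evalI X i = evalI X (n - 1)}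

/-- `Y` is the value at `X` of the singular-value soft-thresholding operator
`𝒯_η`, characterized as the proximal mapping of `η‖·‖_*`:
the (unique) minimizer of `Z ↦ ½‖X − Z‖_F² + η‖Z‖_*`. -/
def IsSVT {m n : ℕ} (η : ℝ) (X Y : Matrix (Fin m) (Fin n) ℝ) : Prop :=
  ∀ Z : Matrix (Fin m) (Fin n) ℝ,
    frobNorm (X - Y) ^ 2 / 2 + η * traceNorm Y ≤ frobNorm (X - Z) ^ 2 / 2 + η * traceNorm Z

/-- The singular-value soft-thresholding operator `𝒯_η`. -/
def softThresh {m n : ℕ} (η : ℝ) (X : Matrix (Fin m) (Fin n) ℝ) :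
    Matrix (Fin m) (Fin n) ℝ :=
  open scoped Classical in
  if h : ∃ Y, IsSVT η X Y then h.choose else 0

instance {m n : ℕ} : MeasurableSpace (Matrix (Fin m) (Fin n) ℝ) :=
  inferInstanceAs (MeasurableSpace (Fin m → Fin n → ℝ))

end

theorem Matrix.isHermitian_transpose_mul_self {m n : ℕ} (X : Matrix (Fin m) (Fin n) ℝ) :
    (Xᴴ * X).IsHermitian :=
  Matrix.isHermitian_conjTranspose_mul_self X

section AuxLemmas

open Finset

namespace Stmt18Aux

noncomputable section

lemma sum_sortedDesc {N : ℕ} (f : Fin N → ℝ) : ∑ i, sortedDesc f i = ∑ i, f i := by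
  have : sortedDesc f = f ∘ (Fin.revPerm.trans (Tuple.sort f)) := by
    funext i; simp [sortedDesc]
  rw [this]
  exact Equiv.sum_comp (Fin.revPerm.trans (Tuple.sort f)) f

lemma frobNorm_sq {m n : ℕ} (X : Matrix (Fin m) (Fin n) ℝ) :
    frobNorm X ^ 2 = ∑ i, ∑ j, X i j ^ 2 :=
  Real.sq_sqrt (by positivity)

lemma sum_eigenvalues_eq_trace {N : ℕ} {A : Matrix (Fin N) (Fin N) ℝ} (hA : A.IsHermitian) :
    ∑ i, hA.eigenvalues i = A.trace := by
  conv_rhs => rw [hA.spectral_theorem]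
  rw [Unitary.conjStarAlgAut_apply, Matrix.trace_mul_cycle, Unitary.coe_star_mul_self, Matrix.one_mul, Matrix.trace_diagonal]
  simp [RCLike.ofReal_real_eq_id]

lemma eigen_diag {N : ℕ} {d : Fin N → ℝ} {A : Matrix (Fin N) (Fin N) ℝ} (hA : A.IsHermitian)
    (hAd : A = Matrix.diagonal d) (k : Fin N) : ∃ j, hA.eigenvalues k = d j := by
  subst hAd
  have hv := hA.mulVec_eigenvectorBasis k
  have hnz : ⇑(hA.eigenvectorBasis k) ≠ 0 := by
    intro hzero
    exact hA.eigenvectorBasis.orthonormal.ne_zero k (by ext j; exact congrFun hzero j)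
  obtain ⟨j, hj⟩ := Function.ne_iff.mp hnz
  refine ⟨j, ?_⟩
  have hvj := congrFun hv j
  rw [Matrix.mulVec_diagonal] at hvj
  have hvj' : d j * (hA.eigenvectorBasis k) j
      = hA.eigenvalues k * (hA.eigenvectorBasis k) j := hvj
  have := mul_right_cancel₀ hj hvj'
  exact this.symm

/-- The trace-norm as a sum of square roots of eigenvalues of `Xᴴ * X`. -/
lemma traceNorm_eq_sum_sqrt {m n : ℕ} (X : Matrix (Fin m) (Fin n) ℝ) :
    traceNorm X = ∑ i, Real.sqrt ((Matrix.isHermitian_transpose_mul_self X).eigenvalues i) := by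
  rw [traceNorm]
  exact sum_sortedDesc _

def diagSum {m n : ℕ} (Z : Matrix (Fin m) (Fin n) ℝ) : ℝ :=
  ∑ i : Fin m, ∑ j : Fin n, if (i : ℕ) = (j : ℕ) then Z i j else 0

lemma sum_dite_sq_le {m n : ℕ} (f : Fin n → ℝ) :
    ∑ i : Fin m, (if hc : (i : ℕ) < n then f ⟨i, hc⟩ else 0) ^ 2 ≤ ∑ j : Fin n, f j ^ 2 := by
  classical
  rcases Nat.eq_zero_or_pos n with hn | hn
  · subst hn
    simp
  · set g : Fin m → Fin n := fun i => ⟨(i : ℕ) % n, Nat.mod_lt _ hn⟩ with hg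
    have h1 : ∑ i : Fin m, (if hc : (i : ℕ) < n then f ⟨i, hc⟩ else 0) ^ 2
        = ∑ i ∈ univ.filter (fun i : Fin m => (i : ℕ) < n), f (g i) ^ 2 := by
      rw [Finset.sum_filter]
      apply Finset.sum_congr rfl
      intro i _
      by_cases hc : (i : ℕ) < n
      · rw [dif_pos hc, if_pos hc]
        have hgi : g i = ⟨(i : ℕ), hc⟩ := Fin.ext (Nat.mod_eq_of_lt hc)
        rw [hgi]
      · rw [dif_neg hc, if_neg hc]
        norm_num
    have h2 : ∑ i ∈ univ.filter (fun i : Fin m => (i : ℕ) < n), f (g i) ^ 2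
        = ∑ j ∈ (univ.filter (fun i : Fin m => (i : ℕ) < n)).image g, f j ^ 2 := by
      rw [Finset.sum_image]
      intro a ha b hb hab
      simp only [Finset.mem_coe, mem_filter] at ha hb
      have ha' : (a : ℕ) % n = (a : ℕ) := Nat.mod_eq_of_lt ha.2
      have hb' : (b : ℕ) % n = (b : ℕ) := Nat.mod_eq_of_lt hb.2
      have : ((g a : Fin n) : ℕ) = ((g b : Fin n) : ℕ) := by rw [hab]
      simp only [hg] at this
      exact Fin.ext (by omega)
    rw [h1, h2]
    exact Finset.sum_le_sum_of_subset_of_nonneg (Finset.subset_univ _)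
      (fun j _ _ => sq_nonneg _)

lemma diagSum_le_traceNorm {m n : ℕ} (Z : Matrix (Fin m) (Fin n) ℝ) :
    diagSum Z ≤ traceNorm Z := by
  classical
  set h := Matrix.isHermitian_transpose_mul_self Z with hh
  set μ := h.eigenvalues with hμdef
  set U : Matrix (Fin n) (Fin n) ℝ := (h.eigenvectorUnitary : Matrix (Fin n) (Fin n) ℝ) with hUdef
  have hstar : star U = Uᵀ := by
    rw [Matrix.star_eq_conjTranspose, Matrix.conjTranspose_eq_transpose_of_trivial]
  have hdiag : Uᵀ * (Zᴴ * Z) * U = Matrix.diagonal μ := by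
    have := h.conjStarAlgAut_star_eigenvectorUnitary
    rw [Unitary.conjStarAlgAut_star_apply] at this
    rw [hstar] at this
    rw [this]
    congr 1
  have hUorth : Uᵀ * U = 1 := by
    rw [← hstar]
    exact Unitary.coe_star_mul_self h.eigenvectorUnitary
  have hUorth' : U * Uᵀ = 1 := by
    rw [← hstar]
    exact Unitary.coe_mul_star_self h.eigenvectorUnitary
  set W : Matrix (Fin m) (Fin n) ℝ := Z * U with hWdef
  have hWW : Wᵀ * W = Matrix.diagonal μ := by
    rw [hWdef, Matrix.transpose_mul]
    have hZT : Zᵀ = Zᴴ := by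
      rw [Matrix.conjTranspose_eq_transpose_of_trivial]
    calc Uᵀ * Zᵀ * (Z * U) = Uᵀ * (Zᴴ * Z) * U := by
          rw [hZT]; simp only [Matrix.mul_assoc]
      _ = Matrix.diagonal μ := hdiag
  have hWcol : ∀ k, ∑ i, W i k ^ 2 = μ k := by
    intro k
    have : (Wᵀ * W) k k = Matrix.diagonal μ k k := by rw [hWW]
    rw [Matrix.mul_apply, Matrix.diagonal_apply_eq] at this
    simpa [Matrix.transpose_apply, pow_two] using this
  have hUcol : ∀ k, ∑ j, U j k ^ 2 = 1 := by
    intro k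
    have : (Uᵀ * U) k k = (1 : Matrix (Fin n) (Fin n) ℝ) k k := by rw [hUorth]
    rw [Matrix.mul_apply, Matrix.one_apply_eq] at this
    simpa [Matrix.transpose_apply, pow_two] using this
  have hμ0 : ∀ k, 0 ≤ μ k := fun k =>
    (Matrix.posSemidef_conjTranspose_mul_self Z).eigenvalues_nonneg k
  have hZW : Z = W * Uᵀ := by
    rw [hWdef, Matrix.mul_assoc, hUorth', Matrix.mul_one]
  -- per-column Cauchy–Schwarz bound
  have key : ∀ k, (∑ i : Fin m, ∑ j : Fin n, if (i : ℕ) = (j : ℕ) then W i k * U j k else 0)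
      ≤ Real.sqrt (μ k) := by
    intro k
    set u : Fin m → ℝ := fun i => if hc : (i : ℕ) < n then U ⟨(i : ℕ), hc⟩ k else 0 with hu
    have h1 : ∀ i : Fin m,
        (∑ j : Fin n, if (i : ℕ) = (j : ℕ) then W i k * U j k else 0) = W i k * u i := by
      intro i
      by_cases hc : (i : ℕ) < n
      · rw [Finset.sum_eq_single (⟨(i : ℕ), hc⟩ : Fin n)]
        · rw [if_pos rfl, hu]
          simp [hc]
        · intro j _ hj
          rw [if_neg]
          intro hij
          exact hj (Fin.ext hij.symm)
        · intro habs
          exact absurd (Finset.mem_univ _) habs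
      · have : u i = 0 := by rw [hu]; simp [hc]
        rw [this, mul_zero]
        apply Finset.sum_eq_zero
        intro j _
        rw [if_neg]
        intro hij
        exact hc (hij ▸ j.isLt)
    have h2 : ∑ i, u i ^ 2 ≤ 1 := by
      calc ∑ i, u i ^ 2 ≤ ∑ j, U j k ^ 2 := sum_dite_sq_le _
        _ = 1 := hUcol k
    have hcs : (∑ i, W i k * u i) ^ 2 ≤ μ k := by
      calc (∑ i, W i k * u i) ^ 2
          ≤ (∑ i, W i k ^ 2) * ∑ i, u i ^ 2 :=
            Finset.sum_mul_sq_le_sq_mul_sq univ _ _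
        _ ≤ (∑ i, W i k ^ 2) * 1 := by
            apply mul_le_mul_of_nonneg_left h2
            positivity
        _ = μ k := by rw [mul_one, hWcol k]
    calc (∑ i : Fin m, ∑ j : Fin n, if (i : ℕ) = (j : ℕ) then W i k * U j k else 0)
        = ∑ i, W i k * u i := Finset.sum_congr rfl (fun i _ => h1 i)
      _ ≤ |∑ i, W i k * u i| := le_abs_self _
      _ = Real.sqrt ((∑ i, W i k * u i) ^ 2) := (Real.sqrt_sq_eq_abs _).symm
      _ ≤ Real.sqrt (μ k) := Real.sqrt_le_sqrt hcs
  have hds : diagSum Z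
      = ∑ k : Fin n, ∑ i : Fin m, ∑ j : Fin n,
          if (i : ℕ) = (j : ℕ) then W i k * U j k else 0 := by
    rw [diagSum]
    have e1 : ∀ i : Fin m, (∑ j : Fin n, if (i : ℕ) = (j : ℕ) then Z i j else 0)
        = ∑ j : Fin n, ∑ k : Fin n, if (i : ℕ) = (j : ℕ) then W i k * U j k else 0 := by
      intro i
      apply Finset.sum_congr rfl; intro j _
      have hZij : Z i j = ∑ k, W i k * U j k := by
        conv_lhs => rw [hZW]
        rw [Matrix.mul_apply]
        simp [Matrix.transpose_apply]
      rw [hZij]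
      by_cases hij : (i : ℕ) = (j : ℕ)
      · simp [hij]
      · simp [hij]
    calc ∑ i : Fin m, ∑ j : Fin n, (if (i : ℕ) = (j : ℕ) then Z i j else 0)
        = ∑ i : Fin m, ∑ j : Fin n, ∑ k : Fin n,
            if (i : ℕ) = (j : ℕ) then W i k * U j k else 0 :=
          Finset.sum_congr rfl (fun i _ => e1 i)
      _ = ∑ i : Fin m, ∑ k : Fin n, ∑ j : Fin n,
            (if (i : ℕ) = (j : ℕ) then W i k * U j k else 0) :=
          Finset.sum_congr rfl (fun i _ => Finset.sum_comm)
      _ = ∑ k : Fin n, ∑ i : Fin m, ∑ j : Fin n,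
            (if (i : ℕ) = (j : ℕ) then W i k * U j k else 0) :=
          Finset.sum_comm
  calc diagSum Z
      = ∑ k : Fin n, ∑ i : Fin m, ∑ j : Fin n,
          if (i : ℕ) = (j : ℕ) then W i k * U j k else 0 := hds
    _ ≤ ∑ k, Real.sqrt (μ k) := Finset.sum_le_sum (fun k _ => key k)
    _ = traceNorm Z := (traceNorm_eq_sum_sqrt Z).symm

end

end Stmt18Aux

end AuxLemmas

/-- The matrix `A = diag(1+σ, σ, …, σ) ∈ ℝ^{m×n}`. -/
noncomputable def Amat (m n : ℕ) (σ : ℝ) : Matrix (Fin m) (Fin n) ℝ :=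
  Matrix.of fun i j =>
    if (i : ℕ) = (j : ℕ) then (if (i : ℕ) = 0 then 1 + σ else σ) else 0

/-- The matrix `E_{1,1} ∈ ℝ^{m×n}` with a single `1` in its top-left entry. -/
noncomputable def Emat (m n : ℕ) : Matrix (Fin m) (Fin n) ℝ :=
  Matrix.of fun i j => if (i : ℕ) = 0 ∧ (j : ℕ) = 0 then 1 else 0

section AuxLemmas2

open Finset

namespace Stmt18Aux

noncomputable section

variable {m n : ℕ}

/-- Evaluation of a matrix at a fixed entry, as a continuous linear map. -/
def evalCLM (i : Fin m) (j : Fin n) : Matrix (Fin m) (Fin n) ℝ →L[ℝ] ℝ :=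
  LinearMap.toContinuousLinearMap
    { toFun := fun X => X i j
      map_add' := fun _ _ => rfl
      map_smul' := fun _ _ => rfl }

lemma evalCLM_apply (i : Fin m) (j : Fin n) (X : Matrix (Fin m) (Fin n) ℝ) :
    evalCLM i j X = X i j := rfl

lemma Dmat_eq (m n : ℕ) (σ : ℝ) :
    Emat m n - Amat m n σ
      = Matrix.of fun (i : Fin m) (j : Fin n) => if (i : ℕ) = (j : ℕ) then -σ else 0 := by
  ext i j
  simp only [Matrix.sub_apply, Emat, Amat, Matrix.of_apply]
  split_ifs <;> first | ring1 | (exfalso; omega)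

lemma EtE (hm : 2 ≤ m) :
    (Emat m n)ᴴ * (Emat m n)
      = Matrix.diagonal (fun j : Fin n => if (j : ℕ) = 0 then (1 : ℝ) else 0) := by
  ext j k
  rw [Matrix.mul_apply]
  simp only [Matrix.conjTranspose_apply, Emat, Matrix.of_apply, star_trivial,
    Matrix.diagonal_apply]
  rw [Finset.sum_eq_single (⟨0, by omega⟩ : Fin m)]
  · simp only [Fin.ext_iff, Fin.val_mk, true_and, eq_self_iff_true]
    split_ifs <;> first | ring1 | (exfalso; omega)
  · intro b _ hb
    have hb' : (b : ℕ) ≠ 0 := fun h => hb (Fin.ext (by simpa using h))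
    simp [hb']
  · intro h; exact absurd (Finset.mem_univ _) h

lemma DtD (σ : ℝ) :
    (Matrix.of fun (i : Fin m) (j : Fin n) => if (i : ℕ) = (j : ℕ) then -σ else 0)ᴴ
      * (Matrix.of fun (i : Fin m) (j : Fin n) => if (i : ℕ) = (j : ℕ) then -σ else 0)
      = Matrix.diagonal (fun j : Fin n => if (j : ℕ) < m then σ ^ 2 else 0) := by
  ext j k
  rw [Matrix.mul_apply]
  simp only [Matrix.conjTranspose_apply, Matrix.of_apply, star_trivial, Matrix.diagonal_apply]
  by_cases hjk : j = k
  · subst hjk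
    rw [if_pos rfl]
    by_cases hjm : (j : ℕ) < m
    · rw [if_pos hjm, Finset.sum_eq_single (⟨(j : ℕ), hjm⟩ : Fin m)]
      · norm_num [sq]
      · intro b _ hb
        have : (b : ℕ) ≠ (j : ℕ) := fun h => hb (Fin.ext h)
        simp [this]
      · intro h; exact absurd (Finset.mem_univ _) h
    · rw [if_neg hjm]
      apply Finset.sum_eq_zero; intro i _
      have : (i : ℕ) ≠ (j : ℕ) := by have := i.isLt; omega
      simp [this]
  · rw [if_neg hjk]
    apply Finset.sum_eq_zero; intro i _
    by_cases h1 : (i : ℕ) = (j : ℕ)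
    · have h2 : (i : ℕ) ≠ (k : ℕ) := fun h => hjk (Fin.ext (by omega))
      simp [h2]
    · simp [h1]

lemma card_filter_lt (m n : ℕ) :
    ((univ : Finset (Fin n)).filter (fun j : Fin n => (j : ℕ) < m)).card = min m n := by
  classical
  rw [← Fintype.card_subtype]
  have e : {j : Fin n // (j : ℕ) < m} ≃ Fin (min m n) :=
    { toFun := fun j => ⟨(j : ℕ), lt_min j.2 j.1.isLt⟩
      invFun := fun k => ⟨⟨(k : ℕ), lt_of_lt_of_le k.isLt (min_le_right m n)⟩,
        lt_of_lt_of_le k.isLt (min_le_left m n)⟩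
      left_inv := fun j => Subtype.ext (Fin.ext rfl)
      right_inv := fun k => Fin.ext rfl }
  rw [Fintype.card_congr e, Fintype.card_fin]

lemma traceNorm_Emat (hm : 2 ≤ m) (hn : 2 ≤ n) : traceNorm (Emat m n) = 1 := by
  classical
  set h := Matrix.isHermitian_transpose_mul_self (Emat m n) with hh
  have hd := EtE (m := m) (n := n) hm
  have hdich : ∀ k, h.eigenvalues k = 0 ∨ h.eigenvalues k = 1 := by
    intro k
    obtain ⟨j, hj⟩ := eigen_diag h hd k
    by_cases h0 : (j : ℕ) = 0
    · right; rw [hj, if_pos h0]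
    · left; rw [hj, if_neg h0]
  have hsum : ∑ k, h.eigenvalues k = 1 := by
    rw [sum_eigenvalues_eq_trace h, hd, Matrix.trace_diagonal]
    rw [Finset.sum_eq_single (⟨0, by omega⟩ : Fin n)]
    · simp
    · intro b _ hb
      have hb' : (b : ℕ) ≠ 0 := fun h' => hb (Fin.ext (by simpa using h'))
      simp [hb']
    · intro h'; exact absurd (Finset.mem_univ _) h'
  rw [traceNorm_eq_sum_sqrt]
  calc ∑ i, Real.sqrt ((Matrix.isHermitian_transpose_mul_self (Emat m n)).eigenvalues i)
      = ∑ i, h.eigenvalues i := by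
        apply Finset.sum_congr rfl; intro i _
        rcases hdich i with h0 | h0 <;> rw [← hh, h0] <;> simp
    _ = 1 := hsum

lemma rank_Emat (hm : 2 ≤ m) (hn : 2 ≤ n) : (Emat m n).rank = 1 := by
  classical
  rw [← Matrix.rank_transpose_mul_self]
  have ht : (Emat m n)ᵀ = (Emat m n)ᴴ :=
    (Matrix.conjTranspose_eq_transpose_of_trivial _).symm
  rw [ht, EtE hm, Matrix.rank_diagonal]
  have hiff : ∀ j : Fin n,
      ((if (j : ℕ) = 0 then (1 : ℝ) else 0) ≠ 0) ↔ j = (⟨0, by omega⟩ : Fin n) := by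
    intro j
    by_cases h0 : (j : ℕ) = 0
    · rw [if_pos h0]
      exact iff_of_true one_ne_zero (Fin.ext (by simpa using h0))
    · rw [if_neg h0]
      exact iff_of_false (by simp) (fun hj => h0 (by rw [hj]))
  rw [Fintype.card_congr (Equiv.subtypeEquivRight hiff)]
  exact Fintype.card_subtype_eq _

lemma multTop_D (hm : 2 ≤ m) (hn : 2 ≤ n) {σ : ℝ} (hσ : 0 < σ) :
    multTop (Matrix.of fun (i : Fin m) (j : Fin n) =>
      if (i : ℕ) = (j : ℕ) then -σ else 0) = min m n := by
  classical
  set D : Matrix (Fin m) (Fin n) ℝ :=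
    Matrix.of (fun i j => if (i : ℕ) = (j : ℕ) then -σ else 0) with hD
  set h := Matrix.isHermitian_transpose_mul_self D with hh
  set μ : Fin n → ℝ := h.eigenvalues with hμ
  have hd : Dᴴ * D = Matrix.diagonal (fun j : Fin n => if (j : ℕ) < m then σ ^ 2 else 0) :=
    DtD σ
  have hdich : ∀ k, μ k = 0 ∨ μ k = σ ^ 2 := by
    intro k
    obtain ⟨j, hj⟩ := eigen_diag h hd k
    by_cases h0 : (j : ℕ) < m
    · right; rw [hμ, hj, if_pos h0]
    · left; rw [hμ, hj, if_neg h0]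
  have hsum : ∑ k, μ k = (min m n : ℝ) * σ ^ 2 := by
    rw [hμ, sum_eigenvalues_eq_trace h, hd, Matrix.trace_diagonal]
    rw [← Finset.sum_filter, Finset.sum_const, card_filter_lt, nsmul_eq_mul]
    push_cast
    ring1
  set c := ((univ : Finset (Fin n)).filter (fun k => μ k = σ ^ 2)).card with hc
  have hcount : c = min m n := by
    have hs : ∑ k, μ k = (c : ℝ) * σ ^ 2 := by
      rw [← Finset.sum_filter_add_sum_filter_not univ (fun k => μ k = σ ^ 2) μ]
      have h1 : ∑ k ∈ univ.filter (fun k => μ k = σ ^ 2), μ k = (c : ℝ) * σ ^ 2 := by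
        rw [Finset.sum_congr rfl (fun k hk => (Finset.mem_filter.mp hk).2),
          Finset.sum_const, nsmul_eq_mul]
      have h2 : ∑ k ∈ univ.filter (fun k => ¬ μ k = σ ^ 2), μ k = 0 := by
        apply Finset.sum_eq_zero; intro k hk
        rcases hdich k with h' | h'
        · exact h'
        · exact absurd h' (Finset.mem_filter.mp hk).2
      rw [h1, h2, add_zero]
    have heq : (c : ℝ) * σ ^ 2 = (min m n : ℝ) * σ ^ 2 := by rw [← hs, hsum]
    have := mul_right_cancel₀ (by positivity : (σ ^ 2 : ℝ) ≠ 0) heq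
    exact_mod_cast this
  have hnz : 0 < n := by omega
  have hex : ∃ i₀ : Fin n, μ i₀ = σ ^ 2 := by
    have hne : ((univ : Finset (Fin n)).filter (fun k => μ k = σ ^ 2)).Nonempty := by
      rw [← Finset.card_pos, ← hc, hcount]
      omega
    obtain ⟨i₀, hi₀⟩ := hne
    exact ⟨i₀, (Finset.mem_filter.mp hi₀).2⟩
  set g : Fin n → ℝ := fun i => Real.sqrt (μ i) with hg
  have hsvals : svalsFin D = sortedDesc g := rfl
  have hgle : ∀ i, g i ≤ σ := by
    intro i
    rcases hdich i with h' | h' <;> rw [hg] <;> simp only [h']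
    · simpa using hσ.le
    · rw [Real.sqrt_sq hσ.le]
  have hgval : ∀ i, ∃ j, sortedDesc g i = g j := fun i => ⟨_, rfl⟩
  have htop : svalI D 0 = σ := by
    rw [svalI, dif_pos hnz]
    rw [hsvals]
    apply le_antisymm
    · obtain ⟨j, hj⟩ := hgval ⟨0, hnz⟩
      rw [hj]; exact hgle j
    · obtain ⟨i₀, hi₀⟩ := hex
      have h1 : g i₀ = σ := by rw [hg]; simp only [hi₀]; exact Real.sqrt_sq hσ.le
      have h2 : (g ∘ Tuple.sort g) ((Tuple.sort g).symm i₀)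
          ≤ (g ∘ Tuple.sort g) ((⟨0, hnz⟩ : Fin n).rev) := by
        apply Tuple.monotone_sort g
        rw [Fin.le_def, Fin.val_rev]
        have := ((Tuple.sort g).symm i₀).isLt
        simp only [Fin.val_mk]
        omega
      simp only [Function.comp_apply, Equiv.apply_symm_apply, h1] at h2
      exact h2
  have hmt : multTop D = Nat.card {i : Fin n // svalsFin D i = svalI D 0} := rfl
  rw [hmt, htop]
  have e1 : {i : Fin n // svalsFin D i = σ} ≃ {i : Fin n // g i = σ} :=
    Equiv.subtypeEquiv (Fin.revPerm.trans (Tuple.sort g)) (fun i => by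
      rw [hsvals]
      exact Iff.rfl)
  rw [Nat.card_congr e1]
  have e2 : ∀ i : Fin n, (g i = σ) ↔ (μ i = σ ^ 2) := by
    intro i
    constructor
    · intro hgi
      rcases hdich i with h' | h'
      · exfalso
        rw [hg] at hgi
        simp only [h', Real.sqrt_zero] at hgi
        exact absurd hgi.symm (ne_of_gt hσ)
      · exact h'
    · intro h'
      rw [hg]; simp only [h']; exact Real.sqrt_sq hσ.le
  rw [Nat.card_eq_fintype_card, Fintype.card_congr (Equiv.subtypeEquivRight e2),
    Fintype.card_subtype]
  exact hcount

end

end Stmt18Aux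

end AuxLemmas2

open Finset Stmt18Aux in
/-- For `f(X) = ½‖X − A‖_F²` with `A = diag(1+σ, σ, …, σ)` and
`σ > 0`: `f` is convex and `1`-smooth with gradient `X − A`; its unique minimizer
over the unit trace-norm ball is `X* = E_{1,1}`, of rank one, while
`∇f(X*) = diag(−σ,…,−σ)` has `#σ₁(∇f(X*)) = min{m,n}`, so the inequality
`max rank ≤ min multiplicity` can be strict. -/
theorem stmt18 {m n : ℕ} (hm : 2 ≤ m) (hn : 2 ≤ n) (σ : ℝ) (hσ : 0 < σ) :
    ConvexOn ℝ Set.univ (fun X : Matrix (Fin m) (Fin n) ℝ =>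
      frobNorm (X - Amat m n σ) ^ 2 / 2) ∧
    (∀ X : Matrix (Fin m) (Fin n) ℝ,
      HasFDerivAt (fun X : Matrix (Fin m) (Fin n) ℝ => frobNorm (X - Amat m n σ) ^ 2 / 2)
        (frobCLM (X - Amat m n σ)) X) ∧
    (∀ X Y : Matrix (Fin m) (Fin n) ℝ,
      frobNorm ((X - Amat m n σ) - (Y - Amat m n σ)) ≤ 1 * frobNorm (X - Y)) ∧
    traceNorm (Emat m n) ≤ 1 ∧
    (∀ Z : Matrix (Fin m) (Fin n) ℝ, traceNorm Z ≤ 1 →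
      frobNorm (Emat m n - Amat m n σ) ^ 2 / 2 ≤ frobNorm (Z - Amat m n σ) ^ 2 / 2) ∧
    (∀ Z : Matrix (Fin m) (Fin n) ℝ, traceNorm Z ≤ 1 →
      frobNorm (Z - Amat m n σ) ^ 2 / 2 = frobNorm (Emat m n - Amat m n σ) ^ 2 / 2 →
      Z = Emat m n) ∧
    (Emat m n).rank = 1 ∧
    (Emat m n - Amat m n σ
      = Matrix.of fun (i : Fin m) (j : Fin n) => if (i : ℕ) = (j : ℕ) then -σ else 0) ∧
    multTop (Emat m n - Amat m n σ) = min m n ∧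
    (Emat m n).rank < multTop (Emat m n - Amat m n σ) := by
    classical
  have hDeq : Emat m n - Amat m n σ
      = Matrix.of fun (i : Fin m) (j : Fin n) => if (i : ℕ) = (j : ℕ) then -σ else 0 :=
    Dmat_eq m n σ
  have hDE : ∀ (i : Fin m) (j : Fin n),
      Emat m n i j - Amat m n σ i j = if (i : ℕ) = (j : ℕ) then -σ else 0 := by
    intro i j
    have := congrFun (congrFun hDeq i) j
    simpa [Matrix.sub_apply] using this
  have hdiagE : diagSum (Emat m n) = 1 := by
    rw [diagSum]
    rw [Finset.sum_eq_single (⟨0, by omega⟩ : Fin m)]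
    · rw [Finset.sum_eq_single (⟨0, by omega⟩ : Fin n)]
      · simp [Emat]
      · intro b _ hb
        have hb' : ¬ ((⟨0, by omega⟩ : Fin m) : ℕ) = (b : ℕ) := by
          intro h'
          exact hb (Fin.ext (by simpa using h'.symm))
        rw [if_neg hb']
      · intro h'; exact absurd (Finset.mem_univ _) h'
    · intro a _ ha
      apply Finset.sum_eq_zero; intro j _
      by_cases hcond : (a : ℕ) = (j : ℕ)
      · rw [if_pos hcond]
        have ha' : (a : ℕ) ≠ 0 := fun h' => ha (Fin.ext (by simpa using h'))
        simp [Emat, ha']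
      · rw [if_neg hcond]
    · intro h'; exact absurd (Finset.mem_univ _) h'
  -- the key expansion of the objective around `Emat`
  have hkey : ∀ Z : Matrix (Fin m) (Fin n) ℝ,
      frobNorm (Z - Amat m n σ) ^ 2 / 2
        = frobNorm (Emat m n - Amat m n σ) ^ 2 / 2 + σ * (1 - diagSum Z)
          + frobNorm (Z - Emat m n) ^ 2 / 2 := by
    intro Z
    rw [frobNorm_sq, frobNorm_sq, frobNorm_sq]
    simp only [Matrix.sub_apply]
    have hcross : ∑ i : Fin m, ∑ j : Fin n,
        (Emat m n i j - Amat m n σ i j) * (Z i j - Emat m n i j)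
        = -σ * (diagSum Z - 1) := by
      have step1 : ∀ (i : Fin m) (j : Fin n),
          (Emat m n i j - Amat m n σ i j) * (Z i j - Emat m n i j)
          = -σ * ((if (i : ℕ) = (j : ℕ) then Z i j else 0)
              - (if (i : ℕ) = (j : ℕ) then Emat m n i j else 0)) := by
        intro i j
        rw [hDE i j]
        by_cases hc : (i : ℕ) = (j : ℕ) <;> simp [hc]
      calc ∑ i : Fin m, ∑ j : Fin n,
            (Emat m n i j - Amat m n σ i j) * (Z i j - Emat m n i j)
          = ∑ i : Fin m, ∑ j : Fin n, -σ * ((if (i : ℕ) = (j : ℕ) then Z i j else 0)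
              - (if (i : ℕ) = (j : ℕ) then Emat m n i j else 0)) :=
            Finset.sum_congr rfl fun i _ => Finset.sum_congr rfl fun j _ => step1 i j
        _ = -σ * (diagSum Z - diagSum (Emat m n)) := by
            rw [diagSum, diagSum]
            simp only [mul_sub, Finset.mul_sum, Finset.sum_sub_distrib]
        _ = -σ * (diagSum Z - 1) := by rw [hdiagE]
    have hsplit : ∑ i : Fin m, ∑ j : Fin n, (Z i j - Amat m n σ i j) ^ 2
        = (∑ i : Fin m, ∑ j : Fin n, (Emat m n i j - Amat m n σ i j) ^ 2)
          + 2 * (∑ i : Fin m, ∑ j : Fin n,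
              (Emat m n i j - Amat m n σ i j) * (Z i j - Emat m n i j))
          + ∑ i : Fin m, ∑ j : Fin n, (Z i j - Emat m n i j) ^ 2 := by
      rw [Finset.mul_sum, ← Finset.sum_add_distrib, ← Finset.sum_add_distrib]
      apply Finset.sum_congr rfl; intro i _
      rw [Finset.mul_sum, ← Finset.sum_add_distrib, ← Finset.sum_add_distrib]
      apply Finset.sum_congr rfl; intro j _
      ring
    rw [hsplit, hcross]
    ring
  have hdle : ∀ Z : Matrix (Fin m) (Fin n) ℝ, traceNorm Z ≤ 1 → diagSum Z ≤ 1 :=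
    fun Z hZ => le_trans (diagSum_le_traceNorm Z) hZ
  refine ⟨?_, ?_, ?_, ?_, ?_, ?_, ?_, hDeq, ?_, ?_⟩
  · -- convexity
    refine ⟨convex_univ, ?_⟩
    intro x _ y _ a b ha hb hab
    simp only [smul_eq_mul]
    rw [frobNorm_sq, frobNorm_sq, frobNorm_sq]
    simp only [Matrix.sub_apply, Matrix.add_apply, Matrix.smul_apply, smul_eq_mul]
    have hterm : ∀ (i : Fin m) (j : Fin n),
        (a * x i j + b * y i j - Amat m n σ i j) ^ 2
          ≤ a * (x i j - Amat m n σ i j) ^ 2 + b * (y i j - Amat m n σ i j) ^ 2 := by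
      intro i j
      have hb' : b = 1 - a := by linarith
      subst hb'
      nlinarith [mul_nonneg (mul_nonneg ha hb) (sq_nonneg (x i j - y i j))]
    have hs : ∑ i : Fin m, ∑ j : Fin n, (a * x i j + b * y i j - Amat m n σ i j) ^ 2
        ≤ a * (∑ i : Fin m, ∑ j : Fin n, (x i j - Amat m n σ i j) ^ 2)
          + b * (∑ i : Fin m, ∑ j : Fin n, (y i j - Amat m n σ i j) ^ 2) := by
      calc ∑ i : Fin m, ∑ j : Fin n, (a * x i j + b * y i j - Amat m n σ i j) ^ 2
          ≤ ∑ i : Fin m, ∑ j : Fin n, (a * (x i j - Amat m n σ i j) ^ 2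
              + b * (y i j - Amat m n σ i j) ^ 2) :=
            Finset.sum_le_sum fun i _ => Finset.sum_le_sum fun j _ => hterm i j
        _ = a * (∑ i : Fin m, ∑ j : Fin n, (x i j - Amat m n σ i j) ^ 2)
              + b * (∑ i : Fin m, ∑ j : Fin n, (y i j - Amat m n σ i j) ^ 2) := by
            simp [Finset.sum_add_distrib, Finset.mul_sum]
    linarith
  · -- derivative
    intro X
    have hfun : (fun X : Matrix (Fin m) (Fin n) ℝ => frobNorm (X - Amat m n σ) ^ 2 / 2)
        = fun X : Matrix (Fin m) (Fin n) ℝ =>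
            ∑ i : Fin m, ∑ j : Fin n, (X i j - Amat m n σ i j) ^ 2 / 2 := by
      funext Y
      rw [frobNorm_sq]
      simp [Matrix.sub_apply, Finset.sum_div]
    rw [hfun]
    have hterm : ∀ (i : Fin m) (j : Fin n),
        HasFDerivAt (fun Y : Matrix (Fin m) (Fin n) ℝ => (Y i j - Amat m n σ i j) ^ 2 / 2)
          ((X i j - Amat m n σ i j) • evalCLM i j) X := by
      intro i j
      have h1 : HasFDerivAt (fun Y : Matrix (Fin m) (Fin n) ℝ => Y i j)
          (evalCLM i j) X := (evalCLM i j).hasFDerivAt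
      have h2 : HasDerivAt (fun t : ℝ => (t - Amat m n σ i j) ^ 2 / 2)
          (X i j - Amat m n σ i j) (X i j) := by
        have h3 := (((hasDerivAt_id (X i j)).sub_const (Amat m n σ i j)).pow 2).div_const 2
        refine h3.congr_deriv ?_
        norm_num
      exact h2.comp_hasFDerivAt X h1
    have hsum : HasFDerivAt
        (fun Y : Matrix (Fin m) (Fin n) ℝ =>
          ∑ i : Fin m, ∑ j : Fin n, (Y i j - Amat m n σ i j) ^ 2 / 2)
        (∑ i : Fin m, ∑ j : Fin n, (X i j - Amat m n σ i j) • evalCLM i j) X :=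
      HasFDerivAt.fun_sum fun i _ => HasFDerivAt.fun_sum fun j _ => hterm i j
    have hclm : frobCLM (X - Amat m n σ)
        = ∑ i : Fin m, ∑ j : Fin n, (X i j - Amat m n σ i j) • evalCLM i j := by
      apply ContinuousLinearMap.ext
      intro H
      simp only [ContinuousLinearMap.sum_apply, ContinuousLinearMap.smul_apply]
      rw [frobCLM]
      rw [LinearMap.coe_toContinuousLinearMap']
      show frobInner (X - Amat m n σ) H = _
      rw [frobInner]
      apply Finset.sum_congr rfl; intro i _
      apply Finset.sum_congr rfl; intro j _
      rw [evalCLM_apply]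
      simp [Matrix.sub_apply]
    rw [hclm]
    exact hsum
  · -- 1-smoothness
    intro X Y
    rw [sub_sub_sub_cancel_right, one_mul]
  · -- trace norm of Emat
    exact le_of_eq (traceNorm_Emat hm hn)
  · -- optimality
    intro Z hZ
    rw [hkey Z]
    have h1 : 0 ≤ σ * (1 - diagSum Z) := mul_nonneg hσ.le (by linarith [hdle Z hZ])
    have h2 : 0 ≤ frobNorm (Z - Emat m n) ^ 2 / 2 := by positivity
    linarith
  · -- uniqueness
    intro Z hZ heq
    rw [hkey Z] at heq
    have h1 : 0 ≤ σ * (1 - diagSum Z) := mul_nonneg hσ.le (by linarith [hdle Z hZ])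
    have h2 : 0 ≤ frobNorm (Z - Emat m n) ^ 2 / 2 := by positivity
    have h3 : frobNorm (Z - Emat m n) ^ 2 = 0 := by linarith
    rw [frobNorm_sq] at h3
    have h4 : ∀ i : Fin m, ∑ j : Fin n, (Z - Emat m n) i j ^ 2 = 0 := by
      intro i
      have hnn : ∀ i ∈ (univ : Finset (Fin m)),
          (0 : ℝ) ≤ ∑ j : Fin n, (Z - Emat m n) i j ^ 2 := fun _ _ => by positivity
      exact (Finset.sum_eq_zero_iff_of_nonneg hnn).mp h3 i (Finset.mem_univ i)
    ext i j
    have hnn2 : ∀ j ∈ (univ : Finset (Fin n)),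
        (0 : ℝ) ≤ (Z - Emat m n) i j ^ 2 := fun _ _ => sq_nonneg _
    have h5 := (Finset.sum_eq_zero_iff_of_nonneg hnn2).mp (h4 i) j (Finset.mem_univ j)
    have h6 : (Z - Emat m n) i j = 0 := (pow_eq_zero_iff two_ne_zero).mp h5
    have h7 : Z i j - Emat m n i j = 0 := by simpa [Matrix.sub_apply] using h6
    linarith
  · -- rank
    exact rank_Emat hm hn
  · -- multiplicity
    rw [hDeq]
    exact multTop_D hm hn hσ
  · rw [rank_Emat hm hn, hDeq, multTop_D hm hn hσ]
    omega
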